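/- Let $n \ge 4$, $p \ge 1$, let $c \ge 0$, let $\lambda \in [-1, 1]$, and let $h^{\alpha}$ ($\alpha = 1, \dots, p$) be symmetric $n \times n$ real matrices. Define $R_{ijkl} = c(\delta_{ik}\delta_{jl} - \delta_{il}\delta_{jk}) + \sum_{\alpha=1}^{p} (h^{\alpha}_{ik} h^{\alpha}_{jl} - h^{\alpha}_{il} h^{\alpha}_{jk})$, and set $S = \sum_{\alpha} \sum_{i,j} (h^{\alpha}_{ij})^2$ and $T_{\alpha} = \sum_{i} h^{\alpha}_{ii}$. If $S < 2c + \frac{1}{n-1} \sum_{\alpha} T_{\alpha}^2$, then $R_{1313} + \lambda^2 R_{1414} + R_{2323} + \lambda^2 R_{2424} - 2\lambda R_{1234} > 0$. -/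

import Mathlib

open Finset

private lemma three_le_sum' {n : ℕ} (f : Fin n → ℝ) (hf : ∀ i, 0 ≤ f i) (a b c : Fin n)
    (hab : a ≠ b) (hac : a ≠ c) (hbc : b ≠ c) : f a + f b + f c ≤ ∑ i, f i := by
  have h1 : ({a, b, c} : Finset (Fin n)).sum f ≤ ∑ i, f i :=
    Finset.sum_le_sum_of_subset_of_nonneg (Finset.subset_univ _) (fun i _ _ => hf i)
  rw [Finset.sum_insert (by simp [hab, hac]), Finset.sum_insert (by simp [hbc]),
    Finset.sum_singleton] at h1
  linarith

private lemma cauchy_diag' {n : ℕ} (hn : 4 ≤ n) (g : Fin n → ℝ) (a b c : Fin n)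
    (hab : a ≠ b) (hac : a ≠ c) (hbc : b ≠ c) :
    (∑ i, g i) ^ 2 ≤ ((n : ℝ) - 1) * (∑ i, (g i) ^ 2 + (g a + g b) * g c) := by
  classical
  set s : Finset (Fin n) := ((Finset.univ.erase a).erase b).erase c with hs
  have hcmem : c ∈ (Finset.univ.erase a).erase b := by
    simp [Finset.mem_erase, hbc.symm, hac.symm]
  have hbmem : b ∈ Finset.univ.erase a := by simp [Finset.mem_erase, hab.symm]
  have hamem : a ∈ (Finset.univ : Finset (Fin n)) := Finset.mem_univ a
  have hsum : ∀ f : Fin n → ℝ, ∑ i, f i = f a + f b + f c + ∑ i ∈ s, f i := by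
    intro f
    have h1 := Finset.sum_erase_add ((Finset.univ.erase a).erase b) f hcmem
    have h2 := Finset.sum_erase_add (Finset.univ.erase a) f hbmem
    have h3 := Finset.sum_erase_add Finset.univ f hamem
    rw [hs]; linarith
  have hcard : (s.card : ℝ) = (n : ℝ) - 3 := by
    have h4 : s.card = n - 3 := by
      rw [hs, Finset.card_erase_of_mem hcmem, Finset.card_erase_of_mem hbmem,
        Finset.card_erase_of_mem hamem, Finset.card_univ, Fintype.card_fin]
      omega
    rw [h4, Nat.cast_sub (by omega)]; norm_num
  have hr : (∑ i ∈ s, g i) ^ 2 ≤ ((n : ℝ) - 3) * ∑ i ∈ s, (g i) ^ 2 := by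
    have := sq_sum_le_card_mul_sum_sq (s := s) (f := g)
    rw [hcard] at this; exact this
  have hq : 0 ≤ ∑ i ∈ s, (g i) ^ 2 := Finset.sum_nonneg fun i _ => sq_nonneg _
  rw [hsum g, hsum (fun i => (g i) ^ 2)]
  set r := ∑ i ∈ s, g i
  set q := ∑ i ∈ s, (g i) ^ 2
  have hm : (1 : ℝ) ≤ (n : ℝ) - 3 := by
    have : (4 : ℝ) ≤ (n : ℝ) := by exact_mod_cast hn
    linarith
  set m := (n : ℝ) - 3 with hmdef
  clear_value m
  clear_value r q
  have key : 0 ≤ m * (((m + 2) * ((g a)^2 + (g b)^2 + (g c)^2 + q + (g a + g b) * g c))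
      - (g a + g b + g c + r) ^ 2) := by
    have hid : m * (((m + 2) * ((g a)^2 + (g b)^2 + (g c)^2 + q + (g a + g b) * g c))
        - (g a + g b + g c + r) ^ 2)
        = (m * g a + m * g c / 2 - r)^2 + (m * g b + m * g c / 2 - r)^2
          + m * (g a - g b)^2 + (m + 2) * (m * q - r^2) + m * (m + 2) * (g c)^2 / 2 := by
      ring
    rw [hid]
    have h1 : (0:ℝ) ≤ m * (g a - g b)^2 :=
      mul_nonneg (by linarith) (sq_nonneg _)
    have h2 : (0:ℝ) ≤ (m + 2) * (m * q - r^2) :=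
      mul_nonneg (by linarith) (by linarith)
    have h3 : (0:ℝ) ≤ m * (m + 2) * (g c)^2 / 2 := by positivity
    have h4 := sq_nonneg (m * g a + m * g c / 2 - r)
    have h5 := sq_nonneg (m * g b + m * g c / 2 - r)
    linarith
  have hn1 : (n : ℝ) - 1 = m + 2 := by rw [hmdef]; ring
  rw [hn1]
  nlinarith [key, hm]

set_option maxHeartbeats 1000000 in
private lemma per_alpha' {n : ℕ} (hn : 4 ≤ n) (lam : ℝ) (hlam1 : -1 ≤ lam) (hlam2 : lam ≤ 1)
    (f : Fin n → Fin n → ℝ) (fsymm : ∀ i j, f i j = f j i) (Tv : ℝ) (hTv : Tv = ∑ i, f i i) :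
    (1 + lam ^ 2) * (Tv ^ 2 / ((n : ℝ) - 1) - ∑ i, ∑ j, (f i j) ^ 2)
      ≤ (f ⟨0, by omega⟩ ⟨0, by omega⟩ * f ⟨2, by omega⟩ ⟨2, by omega⟩
          - f ⟨0, by omega⟩ ⟨2, by omega⟩ * f ⟨2, by omega⟩ ⟨0, by omega⟩)
        + lam ^ 2 * (f ⟨0, by omega⟩ ⟨0, by omega⟩ * f ⟨3, by omega⟩ ⟨3, by omega⟩
          - f ⟨0, by omega⟩ ⟨3, by omega⟩ * f ⟨3, by omega⟩ ⟨0, by omega⟩)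
        + (f ⟨1, by omega⟩ ⟨1, by omega⟩ * f ⟨2, by omega⟩ ⟨2, by omega⟩
          - f ⟨1, by omega⟩ ⟨2, by omega⟩ * f ⟨2, by omega⟩ ⟨1, by omega⟩)
        + lam ^ 2 * (f ⟨1, by omega⟩ ⟨1, by omega⟩ * f ⟨3, by omega⟩ ⟨3, by omega⟩
          - f ⟨1, by omega⟩ ⟨3, by omega⟩ * f ⟨3, by omega⟩ ⟨1, by omega⟩)
        - 2 * lam * (f ⟨0, by omega⟩ ⟨2, by omega⟩ * f ⟨1, by omega⟩ ⟨3, by omega⟩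
          - f ⟨0, by omega⟩ ⟨3, by omega⟩ * f ⟨1, by omega⟩ ⟨2, by omega⟩) := by
  set i0 : Fin n := ⟨0, by omega⟩
  set i1 : Fin n := ⟨1, by omega⟩
  set i2 : Fin n := ⟨2, by omega⟩
  set i3 : Fin n := ⟨3, by omega⟩
  have d01 : i0 ≠ i1 := by simp [i0, i1, Fin.ext_iff]
  have d02 : i0 ≠ i2 := by simp [i0, i2, Fin.ext_iff]
  have d03 : i0 ≠ i3 := by simp [i0, i3, Fin.ext_iff]
  have d12 : i1 ≠ i2 := by simp [i1, i2, Fin.ext_iff]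
  have d13 : i1 ≠ i3 := by simp [i1, i3, Fin.ext_iff]
  have d23 : i2 ≠ i3 := by simp [i2, i3, Fin.ext_iff]
  clear_value i0 i1 i2 i3
  have hn1 : (0 : ℝ) < (n : ℝ) - 1 := by
    have : (4 : ℝ) ≤ (n : ℝ) := by exact_mod_cast hn
    linarith
  -- diagonal Cauchy bounds
  have e1 : Tv ^ 2 / ((n : ℝ) - 1)
      ≤ (∑ i, (f i i) ^ 2) + (f i0 i0 + f i1 i1) * f i2 i2 := by
    rw [div_le_iff₀ hn1, hTv]
    have := cauchy_diag' hn (fun i => f i i) i0 i1 i2 d01 d02 d12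
    calc (∑ i, f i i) ^ 2 ≤ ((n : ℝ) - 1) * (∑ i, (f i i) ^ 2 + (f i0 i0 + f i1 i1) * f i2 i2) :=
          this
      _ = ((∑ i, (f i i) ^ 2) + (f i0 i0 + f i1 i1) * f i2 i2) * ((n : ℝ) - 1) := by ring
  have e2 : Tv ^ 2 / ((n : ℝ) - 1)
      ≤ (∑ i, (f i i) ^ 2) + (f i0 i0 + f i1 i1) * f i3 i3 := by
    rw [div_le_iff₀ hn1, hTv]
    have := cauchy_diag' hn (fun i => f i i) i0 i1 i3 d01 d03 d13
    calc (∑ i, f i i) ^ 2 ≤ ((n : ℝ) - 1) * (∑ i, (f i i) ^ 2 + (f i0 i0 + f i1 i1) * f i3 i3) :=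
          this
      _ = ((∑ i, (f i i) ^ 2) + (f i0 i0 + f i1 i1) * f i3 i3) * ((n : ℝ) - 1) := by ring
  -- lower bound for the full squared norm
  have hrow : ∀ i : Fin n, (0 : ℝ) ≤ (∑ j, (f i j) ^ 2) - (f i i) ^ 2 := fun i =>
    sub_nonneg.mpr (Finset.single_le_sum (fun j _ => sq_nonneg (f i j)) (Finset.mem_univ i))
  have hg012 : ((∑ j, (f i0 j) ^ 2) - (f i0 i0) ^ 2) + ((∑ j, (f i1 j) ^ 2) - (f i1 i1) ^ 2)
      + ((∑ j, (f i2 j) ^ 2) - (f i2 i2) ^ 2)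
      ≤ (∑ i, ∑ j, (f i j) ^ 2) - ∑ i, (f i i) ^ 2 := by
    have h := three_le_sum' (fun i => (∑ j, (f i j) ^ 2) - (f i i) ^ 2) hrow i0 i1 i2 d01 d02 d12
    rw [Finset.sum_sub_distrib] at h
    exact h
  have r0 : (f i0 i0) ^ 2 + (f i0 i2) ^ 2 + (f i0 i3) ^ 2 ≤ ∑ j, (f i0 j) ^ 2 :=
    three_le_sum' (fun j => (f i0 j) ^ 2) (fun j => sq_nonneg _) i0 i2 i3 d02 d03 d23
  have r1 : (f i1 i1) ^ 2 + (f i1 i2) ^ 2 + (f i1 i3) ^ 2 ≤ ∑ j, (f i1 j) ^ 2 :=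
    three_le_sum' (fun j => (f i1 j) ^ 2) (fun j => sq_nonneg _) i1 i2 i3 d12 d13 d23
  have r2 : (f i2 i2) ^ 2 + (f i2 i0) ^ 2 + (f i2 i1) ^ 2 ≤ ∑ j, (f i2 j) ^ 2 :=
    three_le_sum' (fun j => (f i2 j) ^ 2) (fun j => sq_nonneg _) i2 i0 i1 d02.symm d12.symm d01
  have s20 : f i2 i0 = f i0 i2 := fsymm i2 i0
  have s21 : f i2 i1 = f i1 i2 := fsymm i2 i1
  have s30 : f i3 i0 = f i0 i3 := fsymm i3 i0
  have s31 : f i3 i1 = f i1 i3 := fsymm i3 i1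
  have e3 : (∑ i, (f i i) ^ 2) + 2 * (f i0 i2) ^ 2 + 2 * (f i1 i2) ^ 2
      + (f i0 i3) ^ 2 + (f i1 i3) ^ 2 ≤ ∑ i, ∑ j, (f i j) ^ 2 := by
    rw [s20, s21] at r2
    linarith
  rw [s20, s21, s30, s31]
  -- cross terms
  have cr1 : 2 * lam * (f i0 i2 * f i1 i3)
      ≤ lam ^ 2 * (f i0 i2) ^ 2 + (f i1 i3) ^ 2 := by
    nlinarith [sq_nonneg (lam * f i0 i2 - f i1 i3)]
  have cr2 : -((f i0 i3) ^ 2 + lam ^ 2 * (f i1 i2) ^ 2)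
      ≤ 2 * lam * (f i0 i3 * f i1 i2) := by
    nlinarith [sq_nonneg (lam * f i1 i2 + f i0 i3)]
  have hl2 : lam ^ 2 ≤ 1 := by nlinarith
  have hl0 : 0 ≤ lam ^ 2 := sq_nonneg lam
  -- the λ²-part
  have e4 : lam ^ 2 * (Tv ^ 2 / ((n : ℝ) - 1) - ∑ i, ∑ j, (f i j) ^ 2)
      ≤ lam ^ 2 * ((f i0 i0 + f i1 i1) * f i3 i3 - (f i0 i3) ^ 2 - (f i1 i3) ^ 2
        - (f i0 i2) ^ 2 - (f i1 i2) ^ 2) := by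
    apply mul_le_mul_of_nonneg_left _ hl0
    linarith [e2, e3, sq_nonneg (f i0 i2), sq_nonneg (f i1 i2)]
  linarith [e1, e3, e4, cr1, cr2, sq_nonneg (f i0 i2), sq_nonneg (f i1 i2)]


set_option maxHeartbeats 1000000 in
/-- Algebraic heart of Theorem 4.1 in a space form of curvature `c ≥ 0`:
with `R_{ijkl} = c(δ_{ik}δ_{jl} - δ_{il}δ_{jk}) + ∑_α (h^α_{ik}h^α_{jl} - h^α_{il}h^α_{jk})`
the Gauss-equation curvature tensor of a submanifold with second fundamental
form components `h^α`, the pinching condition `S < 2c + (∑_α T_α²)/(n-1)`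
implies Brendle's PIC1 positivity condition
`R₁₃₁₃ + λ²R₁₄₁₄ + R₂₃₂₃ + λ²R₂₄₂₄ - 2λR₁₂₃₄ > 0` for all `λ ∈ [-1,1]`. -/
theorem pic1_positivity (n p : ℕ) (hn : 4 ≤ n) (hp : 1 ≤ p)
    (c : ℝ) (hc : 0 ≤ c) (lam : ℝ) (hlam : lam ∈ Set.Icc (-1 : ℝ) 1)
    (h : Fin p → Fin n → Fin n → ℝ)
    (hsymm : ∀ α i j, h α i j = h α j i)
    (R : Fin n → Fin n → Fin n → Fin n → ℝ)
    (hR : ∀ i j k l, R i j k l =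
      c * ((if i = k then (1 : ℝ) else 0) * (if j = l then (1 : ℝ) else 0)
          - (if i = l then (1 : ℝ) else 0) * (if j = k then (1 : ℝ) else 0))
        + ∑ α, (h α i k * h α j l - h α i l * h α j k))
    (S : ℝ) (hS : S = ∑ α, ∑ i, ∑ j, (h α i j) ^ 2)
    (T : Fin p → ℝ) (hT : ∀ α, T α = ∑ i, h α i i)
    (hpinch : S < 2 * c + (∑ α, (T α) ^ 2) / (n - 1)) :
    R ⟨0, by omega⟩ ⟨2, by omega⟩ ⟨0, by omega⟩ ⟨2, by omega⟩
      + lam ^ 2 * R ⟨0, by omega⟩ ⟨3, by omega⟩ ⟨0, by omega⟩ ⟨3, by omega⟩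
      + R ⟨1, by omega⟩ ⟨2, by omega⟩ ⟨1, by omega⟩ ⟨2, by omega⟩
      + lam ^ 2 * R ⟨1, by omega⟩ ⟨3, by omega⟩ ⟨1, by omega⟩ ⟨3, by omega⟩
      - 2 * lam * R ⟨0, by omega⟩ ⟨1, by omega⟩ ⟨2, by omega⟩ ⟨3, by omega⟩ > 0 := by
  obtain ⟨hlam1, hlam2⟩ := hlam
  rw [hR, hR, hR, hR, hR]
  norm_num [Fin.mk.injEq]
  have key : ∑ α, ((1 + lam ^ 2) * ((T α) ^ 2 / ((n : ℝ) - 1) - ∑ i, ∑ j, (h α i j) ^ 2))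
      ≤ ∑ α, ((h α ⟨0, by omega⟩ ⟨0, by omega⟩ * h α ⟨2, by omega⟩ ⟨2, by omega⟩
          - h α ⟨0, by omega⟩ ⟨2, by omega⟩ * h α ⟨2, by omega⟩ ⟨0, by omega⟩)
        + lam ^ 2 * (h α ⟨0, by omega⟩ ⟨0, by omega⟩ * h α ⟨3, by omega⟩ ⟨3, by omega⟩
          - h α ⟨0, by omega⟩ ⟨3, by omega⟩ * h α ⟨3, by omega⟩ ⟨0, by omega⟩)
        + (h α ⟨1, by omega⟩ ⟨1, by omega⟩ * h α ⟨2, by omega⟩ ⟨2, by omega⟩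
          - h α ⟨1, by omega⟩ ⟨2, by omega⟩ * h α ⟨2, by omega⟩ ⟨1, by omega⟩)
        + lam ^ 2 * (h α ⟨1, by omega⟩ ⟨1, by omega⟩ * h α ⟨3, by omega⟩ ⟨3, by omega⟩
          - h α ⟨1, by omega⟩ ⟨3, by omega⟩ * h α ⟨3, by omega⟩ ⟨1, by omega⟩)
        - 2 * lam * (h α ⟨0, by omega⟩ ⟨2, by omega⟩ * h α ⟨1, by omega⟩ ⟨3, by omega⟩
          - h α ⟨0, by omega⟩ ⟨3, by omega⟩ * h α ⟨1, by omega⟩ ⟨2, by omega⟩)) :=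
    Finset.sum_le_sum (fun α _ => per_alpha' hn lam hlam1 hlam2 (h α) (hsymm α) (T α) (hT α))
  simp only [Finset.sum_add_distrib, Finset.sum_sub_distrib, ← Finset.mul_sum,
    ← Finset.sum_div] at key
  rw [← hS] at key
  have hpos : 0 < (1 + lam ^ 2) * ((∑ α, (T α) ^ 2) / ((n : ℝ) - 1) - S + 2 * c) := by
    apply mul_pos (by positivity)
    linarith
  linarith [key, hpos]
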